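/- Let U be the unimodular matrix with rows (-1,0,1,0,-2), (0,-1,0,0,-2), (0,1,0,1,2), (0,0,0,-1,-1), (1,0,0,0,2), let S be the submonoid of Z^5 generated by h1,...,h9, and let S_A be the submonoid generated by H = {h1, h3-h2, h9-h2, h3-h4, h9-h4, h3-h5, h7-h5, h3-h6, h7-h6}. Then U maps S bijectively onto S_A; in particular S and S_A are isomorphic as monoids. -/
import Mathlib


open Matrix BigOperators

/-- The nine lattice vectors h1,...,h9 in ℤ^5 (indexed 0,...,8). -/
def hv : Fin 9 → Fin 5 → ℤ :=
  ![![1,0,0,0,0], ![0,1,0,0,0], ![0,0,1,0,0], ![0,0,0,1,0], ![0,0,0,0,1],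
    ![2,2,-1,1,-2], ![1,2,-1,1,-1], ![1,2,0,0,-1], ![1,1,0,1,-1]]

/-- Coordinatewise cast of an integer vector to a real vector. -/
def toR (u : Fin 5 → ℤ) : Fin 5 → ℝ := fun i => (u i : ℝ)

/-- The cone of nonnegative real combinations of a finite family of vectors in ℝ^5. -/
def coneOf {k : ℕ} (v : Fin k → Fin 5 → ℝ) : Set (Fin 5 → ℝ) :=
  {x | ∃ c : Fin k → ℝ, (∀ i, 0 ≤ c i) ∧ x = ∑ i, c i • v i}

/-- The cone ω generated by h1,...,h8 in ℝ^5. -/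
def ω : Set (Fin 5 → ℝ) := coneOf (fun i : Fin 8 => toR (hv i.castSucc))

/-- The matrix U. -/
def U : Matrix (Fin 5) (Fin 5) ℤ :=
  !![-1,0,1,0,-2; 0,-1,0,0,-2; 0,1,0,1,2; 0,0,0,-1,-1; 1,0,0,0,2]

/-- The submonoid S of ℤ^5 generated by h1,...,h9. -/
def S : AddSubmonoid (Fin 5 → ℤ) := AddSubmonoid.closure (Set.range hv)

/-- The submonoid S_A of ℤ^5 generated by H. -/
def SA : AddSubmonoid (Fin 5 → ℤ) :=
  AddSubmonoid.closure
    {hv 0, hv 2 - hv 1, hv 8 - hv 1, hv 2 - hv 3, hv 8 - hv 3,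
     hv 2 - hv 4, hv 6 - hv 4, hv 2 - hv 5, hv 6 - hv 5}


def V : Matrix (Fin 5) (Fin 5) ℤ :=
  !![0,2,2,2,1; 0,1,2,2,0; 1,0,0,0,1; 0,1,1,0,0; 0,-1,-1,-1,0]

lemma hVU : V * U = 1 := by decide

/-- U.mulVec as an additive monoid hom. -/
def f : (Fin 5 → ℤ) →+ (Fin 5 → ℤ) := (Matrix.mulVecLin U).toAddMonoidHom

lemma f_apply (v : Fin 5 → ℤ) : f v = U.mulVec v := rfl

lemma hinj : Function.Injective U.mulVec := by
  intro x y h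
  have h2 := congrArg V.mulVec h
  rwa [Matrix.mulVec_mulVec, Matrix.mulVec_mulVec, hVU, Matrix.one_mulVec,
    Matrix.one_mulVec] at h2

lemma himg : U.mulVec '' Set.range hv =
    ({hv 0, hv 2 - hv 1, hv 8 - hv 1, hv 2 - hv 3, hv 8 - hv 3,
      hv 2 - hv 4, hv 6 - hv 4, hv 2 - hv 5, hv 6 - hv 5} : Set (Fin 5 → ℤ)) := by
  ext x
  simp only [Set.mem_image, Set.mem_range, Set.mem_insert_iff, Set.mem_singleton_iff]
  constructor
  · rintro ⟨v, ⟨i, rfl⟩, rfl⟩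
    fin_cases i <;> decide
  · rintro (rfl|rfl|rfl|rfl|rfl|rfl|rfl|rfl|rfl)
    exacts [⟨hv 2, ⟨2, rfl⟩, by decide⟩, ⟨hv 1, ⟨1, rfl⟩, by decide⟩,
      ⟨hv 7, ⟨7, rfl⟩, by decide⟩, ⟨hv 3, ⟨3, rfl⟩, by decide⟩,
      ⟨hv 8, ⟨8, rfl⟩, by decide⟩, ⟨hv 6, ⟨6, rfl⟩, by decide⟩,
      ⟨hv 5, ⟨5, rfl⟩, by decide⟩, ⟨hv 4, ⟨4, rfl⟩, by decide⟩,
      ⟨hv 0, ⟨0, rfl⟩, by decide⟩]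

lemma hmapS : S.map f = SA := by
  rw [S, SA, AddMonoidHom.map_mclosure]
  exact congrArg AddSubmonoid.closure himg

/-- U maps S bijectively onto S_A; in particular S and S_A are isomorphic monoids. -/
theorem stmt_16 :
    Set.BijOn U.mulVec (S : Set (Fin 5 → ℤ)) (SA : Set (Fin 5 → ℤ)) ∧
    Nonempty (S ≃+ SA) := by
  constructor
  · refine ⟨fun x hx => ?_, hinj.injOn, fun y hy => ?_⟩
    · have : f x ∈ S.map f := AddSubmonoid.mem_map_of_mem f hx
      rwa [hmapS] at this
    · rw [← hmapS] at hy
      rcases hy with ⟨x, hx, rfl⟩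
      exact ⟨x, hx, rfl⟩
  · exact ⟨(AddSubmonoid.equivMapOfInjective S f hinj).trans
      (AddEquiv.addSubmonoidCongr hmapS)⟩
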